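/- If the matrices D₀ and D₁ satisfy D₀ᵀD₀ ⪯ I_{N−k} and D₁ᵀD₁ ⪯ I_k (i.e. I_{N−k} − D₀ᵀD₀ and I_k − D₁ᵀD₁ are positive semidefinite), then the transport operator S is dissipative on admissible functions: for every admissible w ∈ C¹([0,1]; ℝ^N), ∫₀¹ (−Λ w′(x))ᵀ Λ̃ w(x) dx ≤ 0. -/

import Mathlib

open MeasureTheory

lemma contract_aux {m n : ℕ} (A : Matrix (Fin m) (Fin n) ℝ)
    (h : ((1 : Matrix (Fin n) (Fin n) ℝ) - A.transpose * A).PosSemidef)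
    (v : Fin n → ℝ) :
    ∑ j, A.mulVec v j * A.mulVec v j ≤ ∑ i, v i * v i := by
  have h2 := h.dotProduct_mulVec_nonneg v
  simp only [Matrix.sub_mulVec, Matrix.one_mulVec, dotProduct_sub, star_trivial] at h2
  rw [← Matrix.mulVec_mulVec, Matrix.dotProduct_mulVec, Matrix.vecMul_transpose] at h2
  simp only [dotProduct] at h2
  linarith


/-- If `D₀ᵀD₀ ⪯ I` and `D₁ᵀD₁ ⪯ I`, then the transport operator `Sw = -Λw'` is
dissipative on admissible C¹ functions, i.e. `⟨Sw, w⟩_H ≤ 0` for the weighted inner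
product `⟨w₁,w₂⟩ = ∫₀¹ w₁ᵀ Λ̃ w₂`. The state `w` is split into its first `k` components
`wp` (speeds `lp i > 0`) and its last `N - k = l` components `wm` (speeds `lm j < 0`). -/
theorem statement6 (k l : ℕ) (lp : Fin k → ℝ) (lm : Fin l → ℝ)
    (hlp : ∀ i, 0 < lp i) (hlm : ∀ j, lm j < 0)
    (D₀ : Matrix (Fin k) (Fin l) ℝ) (D₁ : Matrix (Fin l) (Fin k) ℝ)
    -- D₀ᵀD₀ ⪯ I and D₁ᵀD₁ ⪯ I :
    (hD₀ : ((1 : Matrix (Fin l) (Fin l) ℝ) - D₀.transpose * D₀).PosSemidef)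
    (hD₁ : ((1 : Matrix (Fin k) (Fin k) ℝ) - D₁.transpose * D₁).PosSemidef)
    (wp wp' : ℝ → Fin k → ℝ) (wm wm' : ℝ → Fin l → ℝ)
    -- `w` is C¹ on [0,1] with derivative `(wp', wm')`:
    (hwp : ∀ i, ∀ x ∈ Set.Icc (0:ℝ) 1,
      HasDerivWithinAt (fun t => wp t i) (wp' x i) (Set.Icc 0 1) x)
    (hwm : ∀ j, ∀ x ∈ Set.Icc (0:ℝ) 1,
      HasDerivWithinAt (fun t => wm t j) (wm' x j) (Set.Icc 0 1) x)
    (hwp' : ∀ i, ContinuousOn (fun t => wp' t i) (Set.Icc 0 1))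
    (hwm' : ∀ j, ContinuousOn (fun t => wm' t j) (Set.Icc 0 1))
    -- boundary conditions (admissibility):
    (hb0 : wp 0 = D₀.mulVec (wm 0))
    (hb1 : wm 1 = D₁.mulVec (wp 1)) :
    (∫ x in (0:ℝ)..1,
        ((∑ i, (-(lp i * wp' x i)) * ((1 / |lp i|) * wp x i)) +
          ∑ j, (-(lm j * wm' x j)) * ((1 / |lm j|) * wm x j))) ≤ 0 := by
  set F : ℝ → ℝ := fun x => ((∑ j, wm x j * wm x j) - ∑ i, wp x i * wp x i) / 2 with hF
  set f' : ℝ → ℝ := fun x => (∑ j, wm' x j * wm x j) - ∑ i, wp' x i * wp x i with hf'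
  -- pointwise identity of the integrand
  have key : ∀ x, ((∑ i, (-(lp i * wp' x i)) * ((1 / |lp i|) * wp x i)) +
      ∑ j, (-(lm j * wm' x j)) * ((1 / |lm j|) * wm x j)) = f' x := by
    intro x
    have h1 : ∀ i, (-(lp i * wp' x i)) * ((1 / |lp i|) * wp x i) = -(wp' x i * wp x i) := by
      intro i
      have hne := (hlp i).ne'
      rw [abs_of_pos (hlp i)]
      field_simp
    have h2 : ∀ j, (-(lm j * wm' x j)) * ((1 / |lm j|) * wm x j) = wm' x j * wm x j := by
      intro j
      rw [abs_of_neg (hlm j)]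
      have := (hlm j).ne
      field_simp
    simp only [h1, h2, Finset.sum_neg_distrib, hf']
    ring
  -- continuity of components
  have cwp : ∀ i, ContinuousOn (fun t => wp t i) (Set.Icc (0:ℝ) 1) :=
    fun i x hx => (hwp i x hx).continuousWithinAt
  have cwm : ∀ j, ContinuousOn (fun t => wm t j) (Set.Icc (0:ℝ) 1) :=
    fun j x hx => (hwm j x hx).continuousWithinAt
  have cF : ContinuousOn F (Set.Icc (0:ℝ) 1) := by
    apply ContinuousOn.div_const
    exact (continuousOn_finset_sum _ (fun j _ => (cwm j).mul (cwm j))).sub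
      (continuousOn_finset_sum _ (fun i _ => (cwp i).mul (cwp i)))
  have cf' : ContinuousOn f' (Set.Icc (0:ℝ) 1) :=
    (continuousOn_finset_sum _ (fun j _ => (hwm' j).mul (cwm j))).sub
      (continuousOn_finset_sum _ (fun i _ => (hwp' i).mul (cwp i)))
  -- derivative of F
  have hd : ∀ x ∈ Set.Icc (0:ℝ) 1, HasDerivWithinAt F (f' x) (Set.Icc 0 1) x := by
    intro x hx
    have h1 : HasDerivWithinAt (fun t => ∑ j, wm t j * wm t j)
        (∑ j, (wm' x j * wm x j + wm x j * wm' x j)) (Set.Icc 0 1) x :=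
      HasDerivWithinAt.fun_sum (fun j _ => (hwm j x hx).mul (hwm j x hx))
    have h2 : HasDerivWithinAt (fun t => ∑ i, wp t i * wp t i)
        (∑ i, (wp' x i * wp x i + wp x i * wp' x i)) (Set.Icc 0 1) x :=
      HasDerivWithinAt.fun_sum (fun i _ => (hwp i x hx).mul (hwp i x hx))
    have h3 := (h1.sub h2).div_const 2
    refine h3.congr_deriv ?_
    have e1 : ∀ j : Fin l, wm' x j * wm x j + wm x j * wm' x j = 2 * (wm' x j * wm x j) :=
      fun j => by ring
    have e2 : ∀ i : Fin k, wp' x i * wp x i + wp x i * wp' x i = 2 * (wp' x i * wp x i) :=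
      fun i => by ring
    simp only [e1, e2, ← Finset.mul_sum, hf']
    ring
  -- rewrite the integral
  have hcongr : (∫ x in (0:ℝ)..1,
        ((∑ i, (-(lp i * wp' x i)) * ((1 / |lp i|) * wp x i)) +
          ∑ j, (-(lm j * wm' x j)) * ((1 / |lm j|) * wm x j))) = ∫ x in (0:ℝ)..1, f' x := by
    apply intervalIntegral.integral_congr
    intro x _
    exact key x
  rw [hcongr]
  have hFTC : (∫ x in (0:ℝ)..1, f' x) = F 1 - F 0 := by
    apply intervalIntegral.integral_eq_sub_of_hasDeriv_right_of_le (by norm_num) cF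
    · intro x hx
      exact (((hd x (Set.Ioo_subset_Icc_self hx)).hasDerivAt
        (Icc_mem_nhds hx.1 hx.2)).hasDerivWithinAt)
    · exact (cf'.mono (by rw [Set.uIcc_of_le (by norm_num : (0:ℝ) ≤ 1)])).intervalIntegrable
  rw [hFTC]
  have hA := contract_aux D₁ hD₁ (wp 1)
  have hB := contract_aux D₀ hD₀ (wm 0)
  rw [← hb1] at hA
  rw [← hb0] at hB
  simp only [hF]
  linarith
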